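/- For integers L ≥ 1 and 0 ≤ j ≤ L, the alternating sum ∑_{i=j}^{L} (-1)^{i-j} (C(2L, L+i) - C(2L, L+i+1)) equals C(2L-2, L-j) - C(2L-2, L-j-2), where C(n,k) denotes the binomial coefficient (with C(n,k) = 0 whenever k < 0 or k > n). -/

import Mathlib

/-- Binomial coefficient with integer lower index, zero outside range. -/
def C (n : ℕ) (k : ℤ) : ℤ := if 0 ≤ k then (n.choose k.toNat : ℤ) else 0

lemma C_pascal (n : ℕ) (k : ℤ) : C (n+1) k = C n k + C n (k-1) := by
  unfold C
  rcases lt_trichotomy k 0 with h | h | h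
  · rw [if_neg (by omega), if_neg (by omega), if_neg (by omega)]; ring
  · subst h; simp
  · have h1 : (0:ℤ) ≤ k := le_of_lt h
    have h2 : (0:ℤ) ≤ k - 1 := by omega
    rw [if_pos h1, if_pos h1, if_pos h2]
    have hk : k.toNat = (k-1).toNat + 1 := by omega
    rw [hk, Nat.choose_succ_succ]
    push_cast; ring

lemma C_pascal2 (n : ℕ) (k : ℤ) : C (n+2) k = C n k + 2*C n (k-1) + C n (k-2) := by
  rw [show n+2 = (n+1)+1 from rfl, C_pascal, C_pascal, C_pascal,
    show k - 1 - 1 = k - 2 by ring]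
  ring

lemma C_symm (n : ℕ) (k : ℤ) : C n k = C n ((n:ℤ) - k) := by
  unfold C
  by_cases h1 : 0 ≤ k
  · by_cases h2 : k ≤ n
    · rw [if_pos h1, if_pos (by omega)]
      have h3 : ((n:ℤ) - k).toNat = n - k.toNat := by omega
      have h4 : k.toNat ≤ n := by omega
      rw [h3, Nat.choose_symm h4]
    · rw [if_pos h1, if_neg (by omega)]
      have : n < k.toNat := by omega
      simp [Nat.choose_eq_zero_of_lt this]
  · rw [if_neg h1, if_pos (by omega)]
    have : n < ((n:ℤ) - k).toNat := by omega
    simp [Nat.choose_eq_zero_of_lt this]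

lemma key (L j : ℕ) (hL : 1 ≤ L) :
    C (2*L) ((L:ℤ)+j) - C (2*L) ((L:ℤ)+j+1)
      = (C (2*L-2) ((L:ℤ)-j) - C (2*L-2) ((L:ℤ)-j-2))
        + (C (2*L-2) ((L:ℤ)-j-1) - C (2*L-2) ((L:ℤ)-j-3)) := by
  have hn : 2*L = (2*L-2) + 2 := by omega
  rw [show C (2*L) ((L:ℤ)+j) = C ((2*L-2)+2) ((L:ℤ)+j) by rw [← hn],
    show C (2*L) ((L:ℤ)+j+1) = C ((2*L-2)+2) ((L:ℤ)+j+1) by rw [← hn],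
    C_pascal2, C_pascal2]
  have e1 : C (2*L-2) ((L:ℤ)+j) = C (2*L-2) ((L:ℤ)-j-2) := by
    rw [C_symm]; congr 1; omega
  have e2 : C (2*L-2) ((L:ℤ)+j-1) = C (2*L-2) ((L:ℤ)-j-1) := by
    rw [C_symm]; congr 1; omega
  have e3 : C (2*L-2) ((L:ℤ)+j-2) = C (2*L-2) ((L:ℤ)-j) := by
    rw [C_symm]; congr 1; omega
  have e4 : C (2*L-2) ((L:ℤ)+j+1) = C (2*L-2) ((L:ℤ)-j-3) := by
    rw [C_symm]; congr 1; omega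
  rw [show (L:ℤ)+j+1-1 = (L:ℤ)+j by ring, show (L:ℤ)+j+1-2 = (L:ℤ)+j-1 by ring,
    e1, e2, e3, e4]
  ring

lemma main_aux (L : ℕ) (hL : 1 ≤ L) :
    ∀ d j, j ≤ L → j + d = L →
    ∑ i ∈ Finset.Icc j L,
        (-1 : ℤ) ^ (i - j) * (C (2*L) ((L : ℤ) + i) - C (2*L) ((L : ℤ) + i + 1))
      = C (2*L - 2) ((L : ℤ) - j) - C (2*L - 2) ((L : ℤ) - j - 2) := by
  intro d
  induction d with
  | zero =>
    intro j hjL hjd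
    have hj : L = j := by omega
    subst hj
    rw [Finset.Icc_self, Finset.sum_singleton]
    have h1 : C (2*L) ((L:ℤ)+L) = 1 := by
      unfold C
      rw [if_pos (by omega)]
      have : ((L:ℤ)+L).toNat = 2*L := by omega
      rw [this, Nat.choose_self]; norm_num
    have h2 : C (2*L) ((L:ℤ)+L+1) = 0 := by
      unfold C
      rw [if_pos (by omega)]
      have : ((L:ℤ)+L+1).toNat = 2*L+1 := by omega
      rw [this, Nat.choose_eq_zero_of_lt (by omega)]; norm_num
    have h3 : C (2*L-2) ((L:ℤ)-L) = 1 := by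
      unfold C
      rw [if_pos (by omega)]
      have : ((L:ℤ)-L).toNat = 0 := by omega
      rw [this, Nat.choose_zero_right]; norm_num
    have h4 : C (2*L-2) ((L:ℤ)-L-2) = 0 := by
      unfold C
      rw [if_neg (by omega)]
    rw [h1, h2, h3, h4]
    norm_num
  | succ d ih =>
    intro j hjL hjd
    have hj1 : j + 1 ≤ L := by omega
    have hins : Finset.Icc j L = insert j (Finset.Icc (j+1) L) := by
      rw [Finset.Icc_add_one_left_eq_Ioc, Finset.Ioc_insert_left hjL]
    rw [hins, Finset.sum_insert (by simp)]
    have hs : ∑ i ∈ Finset.Icc (j+1) L,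
        (-1 : ℤ) ^ (i - j) * (C (2*L) ((L : ℤ) + i) - C (2*L) ((L : ℤ) + i + 1))
        = -∑ i ∈ Finset.Icc (j+1) L,
        (-1 : ℤ) ^ (i - (j+1)) * (C (2*L) ((L : ℤ) + i) - C (2*L) ((L : ℤ) + i + 1)) := by
      rw [← Finset.sum_neg_distrib]
      refine Finset.sum_congr rfl (fun i hi => ?_)
      simp only [Finset.mem_Icc] at hi
      have : i - j = (i - (j+1)) + 1 := by omega
      rw [this, pow_succ]
      ring
    rw [hs, ih (j+1) hj1 (by omega)]
    have a1 : (L:ℤ) - ↑(j+1) = (L:ℤ) - j - 1 := by push_cast; ring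
    have a2 : (L:ℤ) - ↑j - 1 - 2 = (L:ℤ) - j - 3 := by ring
    rw [a1, a2, Nat.sub_self, pow_zero, one_mul, key L j hL]
    ring

theorem alternating_sum_binom (L j : ℕ) (hL : 1 ≤ L) (hj : j ≤ L) :
    ∑ i ∈ Finset.Icc j L,
        (-1 : ℤ) ^ (i - j) * (C (2*L) ((L : ℤ) + i) - C (2*L) ((L : ℤ) + i + 1))
      = C (2*L - 2) ((L : ℤ) - j) - C (2*L - 2) ((L : ℤ) - j - 2) := by
  exact main_aux L hL (L - j) j hj (by omega)
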